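/- arXiv:1911.00579 — 2 statements merged into one kernel-verified Lean document; each statement's English description precedes it below -/
import Mathlib

section
/- Let C be an n×n real symmetric matrix such that for every n×n real symmetric matrix X, the Hadamard product C ∘ X is majorized by X. Then C is a correlation matrix, i.e., C is positive semidefinite and every diagonal entry of C equals 1. -/
open Matrix

/-- `v` is majorized by `w`: for every `k`, the sum of the `k` largest entries of `v`
is at most the sum of the `k` largest entries of `w`, with equality for `k = n`.
Stated equivalently: every subset sum of `v` is dominated by some subset sum of `w`
of the same cardinality, and the total sums agree. -/
def VecMajorizedBy {ι : Type*} [Fintype ι] (v w : ι → ℝ) : Prop :=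
  (∀ s : Finset ι, ∃ t : Finset ι, t.card = s.card ∧ ∑ i ∈ s, v i ≤ ∑ i ∈ t, w i) ∧
    ∑ i, v i = ∑ i, w i

/-- `X` is majorized by `Y`: both are (real) symmetric and the eigenvalue vector of `X`
is majorized by the eigenvalue vector of `Y`. -/
def MatMajorizedBy {ι : Type*} [Fintype ι] [DecidableEq ι]
    (X Y : Matrix ι ι ℝ) : Prop :=
  ∃ (hX : X.IsHermitian) (hY : Y.IsHermitian),
    VecMajorizedBy hX.eigenvalues hY.eigenvalues

lemma trace_eq_sum_eig' {n : ℕ} {A : Matrix (Fin n) (Fin n) ℝ} (hA : A.IsHermitian) :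
    A.trace = ∑ i, hA.eigenvalues i := by
  rw [hA.trace_eq_sum_eigenvalues]
  simp

/-- If `C` is a real symmetric matrix such that `C ⊙ X` is majorized by `X` for every
real symmetric `X`, then `C` is a correlation matrix: positive semidefinite with all
diagonal entries equal to `1`. -/
theorem hadamard_majorized_correlation {n : ℕ} (C : Matrix (Fin n) (Fin n) ℝ)
    (hC : C.IsHermitian)
    (h : ∀ X : Matrix (Fin n) (Fin n) ℝ, X.IsHermitian → MatMajorizedBy (C ⊙ X) X) :
    C.PosSemidef ∧ ∀ i, C i i = 1 := by
  have traceEq : ∀ X : Matrix (Fin n) (Fin n) ℝ, X.IsHermitian →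
      (C ⊙ X).trace = X.trace := by
    intro X hX
    obtain ⟨h1, h2, maj⟩ := h X hX
    rw [trace_eq_sum_eig' h1, trace_eq_sum_eig' h2, maj.2]
  constructor
  · -- positive semidefinite
    refine .of_dotProduct_mulVec_nonneg hC fun v => ?_
    -- consider X = v vᵀ
    set X : Matrix (Fin n) (Fin n) ℝ := Matrix.vecMulVec v v with hXdef
    have hX : X.IsHermitian := by
      ext i j
      simp [hXdef, Matrix.vecMulVec_apply, mul_comm]
    obtain ⟨h1, h2, maj⟩ := h X hX
    -- eigenvalues of X are nonneg since X is PSD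
    have hXpsd : X.PosSemidef := by
      refine .of_dotProduct_mulVec_nonneg hX fun x => ?_
      have : x ⬝ᵥ (X *ᵥ x) = (∑ i, v i * x i) ^ 2 := by
        simp only [hXdef, dotProduct, Matrix.mulVec, Matrix.vecMulVec_apply,
          dotProduct]
        rw [sq, Finset.sum_mul_sum]
        rw [Finset.sum_congr rfl fun i _ => ?_]
        rw [Finset.mul_sum]
        exact Finset.sum_congr rfl fun j _ => by ring
      simp only [star_trivial] at *
      rw [this]
      positivity
    have hXev : ∀ i, 0 ≤ h2.eigenvalues i := hXpsd.eigenvalues_nonneg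
    -- eigenvalues of C ⊙ X are nonneg
    have hCXev : ∀ j, 0 ≤ h1.eigenvalues j := by
      intro j
      obtain ⟨t, ht, hle⟩ := maj.1 (Finset.univ.erase j)
      have h3 : ∑ i ∈ t, h2.eigenvalues i ≤ ∑ i, h2.eigenvalues i :=
        Finset.sum_le_sum_of_subset_of_nonneg (Finset.subset_univ t)
          (fun i _ _ => hXev i)
      have h4 : ∑ i ∈ Finset.univ.erase j, h1.eigenvalues i + h1.eigenvalues j
          = ∑ i, h1.eigenvalues i := Finset.sum_erase_add _ _ (Finset.mem_univ j)
      have h5 : ∑ i, h1.eigenvalues i = ∑ i, h2.eigenvalues i := maj.2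
      linarith
    have hCXpsd : (C ⊙ X).PosSemidef := h1.posSemidef_iff_eigenvalues_nonneg.mpr hCXev
    -- apply the PSD quadratic form at the all-ones vector
    have key := hCXpsd.dotProduct_mulVec_nonneg (fun _ => 1)
    simp only [star_trivial] at key ⊢
    have : (fun _ => (1:ℝ)) ⬝ᵥ ((C ⊙ X) *ᵥ fun _ => 1) = v ⬝ᵥ (C *ᵥ v) := by
      simp only [dotProduct, Matrix.mulVec, Matrix.hadamard_apply, hXdef,
        Matrix.vecMulVec_apply, dotProduct, one_mul, mul_one]
      rw [Finset.sum_congr rfl fun i _ => ?_]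
      rw [Finset.mul_sum]
      exact Finset.sum_congr rfl fun j _ => by ring
    rwa [this] at key
  · -- diagonal entries are 1
    intro i
    have hX : (Matrix.single i i (1:ℝ)).IsHermitian := by
      ext a b
      simp [Matrix.single, and_comm]
    have := traceEq _ hX
    simp only [Matrix.trace, Matrix.diag, Matrix.hadamard_apply,
      Matrix.single, Matrix.of_apply] at this
    simpa using this
end

section
/- Let A be an n×n real symmetric positive semidefinite matrix with positive semidefinite square root √A. Then for every n×n real symmetric matrix X, the matrix √A X √A is majorized by (AX + XA)/2. -/
open Matrix

/-- The positive semidefinite square root, as defined in Mathlib of December 2024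
(since removed from Mathlib). -/
noncomputable def Matrix.PosSemidef.sqrt {n : Type*} [Fintype n] [DecidableEq n]
    {A : Matrix n n ℝ} (hA : A.PosSemidef) : Matrix n n ℝ :=
  hA.1.eigenvectorUnitary.1 * diagonal ((√·) ∘ hA.1.eigenvalues) *
  (star hA.1.eigenvectorUnitary : Matrix n n ℝ)

lemma aux_posSemidef_sqrt {n : Type*} [Fintype n] [DecidableEq n]
    {A : Matrix n n ℝ} (hA : A.PosSemidef) : hA.sqrt.PosSemidef := by
  unfold Matrix.PosSemidef.sqrt
  have h1 : (diagonal ((√·) ∘ hA.1.eigenvalues)).PosSemidef :=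
    Matrix.PosSemidef.diagonal fun i => Real.sqrt_nonneg _
  have := h1.mul_mul_conjTranspose_same (hA.1.eigenvectorUnitary : Matrix n n ℝ)
  rwa [← Matrix.star_eq_conjTranspose] at this

lemma aux_sqrt_mul_self {n : Type*} [Fintype n] [DecidableEq n]
    {A : Matrix n n ℝ} (hA : A.PosSemidef) : hA.sqrt * hA.sqrt = A := by
  unfold Matrix.PosSemidef.sqrt
  have hUU : star (hA.1.eigenvectorUnitary : Matrix n n ℝ) * hA.1.eigenvectorUnitary = 1 :=
    Matrix.UnitaryGroup.star_mul_self _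
  conv_rhs => rw [hA.1.spectral_theorem, Unitary.conjStarAlgAut_apply]
  simp only [Matrix.mul_assoc]
  rw [← Matrix.mul_assoc (star _) (hA.1.eigenvectorUnitary : Matrix n n ℝ), hUU, Matrix.one_mul,
    ← Matrix.mul_assoc (diagonal _) (diagonal _), diagonal_mul_diagonal]
  congr 3
  funext i
  simp [Real.mul_self_sqrt (hA.eigenvalues_nonneg i)]

section AuxLyapunov
open Matrix MeasureTheory Set
open scoped Matrix

/-! ### Auxiliary results -/

section Integral

lemma aux_integral_exp_neg_mul_Ioi_zero {b : ℝ} (hb : 0 < b) :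
    ∫ t in Ioi (0:ℝ), Real.exp (-b*t) = 1/b := by
  have h : ∀ x ∈ Ici (0:ℝ), HasDerivAt (fun t => -Real.exp (-b*t)/b) (Real.exp (-b*x)) x := by
    intro x _
    have h2 : HasDerivAt (fun t => Real.exp (-b*t)) (Real.exp (-b*x) * (-b)) x := by
      have h1 : HasDerivAt (fun t : ℝ => -b*t) (-b) x := by
        simpa using (hasDerivAt_id x).const_mul (-b)
      exact h1.exp
    have h3 := (h2.neg).div_const b
    have e : Real.exp (-b*x) = -(Real.exp (-b*x) * -b) / b := by
      rw [eq_div_iff hb.ne']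
      ring
    rw [e]
    exact h3
  have hint : IntegrableOn (fun t => Real.exp (-b*t)) (Ioi (0:ℝ)) :=
    exp_neg_integrableOn_Ioi 0 hb
  have htend : Filter.Tendsto (fun t => -Real.exp (-b*t)/b) Filter.atTop (nhds 0) := by
    have h4 : Filter.Tendsto (fun t : ℝ => -b*t) Filter.atTop Filter.atBot :=
      Filter.Tendsto.const_mul_atTop_of_neg (neg_neg_iff_pos.mpr hb) Filter.tendsto_id
    have h5 := (Real.tendsto_exp_atBot.comp h4).neg.div_const b
    simpa using h5
  have key := integral_Ioi_of_hasDerivAt_of_tendsto' h hint htend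
  simp only [neg_mul] at key ⊢
  rw [key]
  simp [hb.ne']
  ring

end Integral

section Cauchy
variable {ι : Type*} [Fintype ι]

private noncomputable def gfun (c b : ι → ℝ) (i : ι) (t : ℝ) : ℝ :=
  c i * (Real.sqrt 2 * b i * Real.exp (-(b i^2) * t))

omit [Fintype ι] in
lemma gfun_pair (c b : ι → ℝ) (hb : ∀ i, 0 ≤ b i) (i j : ι) :
    IntegrableOn (fun t => gfun c b i t * gfun c b j t) (Ioi (0:ℝ)) ∧
    ∫ t in Ioi (0:ℝ), gfun c b i t * gfun c b j t
      = c i * c j * (2 * b i * b j / (b i^2 + b j^2)) := by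
  rcases eq_or_lt_of_le (hb i) with hi | hi
  · have h0 : (fun t => gfun c b i t * gfun c b j t) = fun _ => 0 := by
      funext t; simp [gfun, ← hi]
    rw [h0]
    simp [← hi]
  rcases eq_or_lt_of_le (hb j) with hj | hj
  · have h0 : (fun t => gfun c b i t * gfun c b j t) = fun _ => 0 := by
      funext t; simp [gfun, ← hj]
    rw [h0]
    simp [← hj]
  have hs : 0 < b i^2 + b j^2 := by positivity
  have hfe : (fun t => gfun c b i t * gfun c b j t)
      = fun t => (c i * c j * (2 * b i * b j)) * Real.exp (-(b i^2 + b j^2)*t) := by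
    funext t
    have h2 : Real.sqrt 2 * Real.sqrt 2 = 2 :=
      Real.mul_self_sqrt (by norm_num : (0:ℝ) ≤ 2)
    have h3 : Real.exp (-(b i^2) * t) * Real.exp (-(b j^2) * t)
        = Real.exp (-(b i^2 + b j^2)*t) := by
      rw [← Real.exp_add]; ring_nf
    simp only [gfun]
    calc c i * (Real.sqrt 2 * b i * Real.exp (-(b i^2) * t)) *
          (c j * (Real.sqrt 2 * b j * Real.exp (-(b j^2) * t)))
        = (c i * c j * ((Real.sqrt 2 * Real.sqrt 2) * b i * b j)) *
          (Real.exp (-(b i^2) * t) * Real.exp (-(b j^2) * t)) := by ring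
      _ = c i * c j * (2 * b i * b j) * Real.exp (-(b i^2 + b j^2)*t) := by
          rw [h2, h3]
  constructor
  · rw [hfe]
    exact (exp_neg_integrableOn_Ioi 0 hs).const_mul _
  · rw [hfe]
    rw [integral_const_mul, aux_integral_exp_neg_mul_Ioi_zero hs]
    field_simp

lemma cauchy_quadform_nonneg (c b : ι → ℝ) (hb : ∀ i, 0 ≤ b i) :
    0 ≤ ∑ i, ∑ j, c i * c j * (2 * b i * b j / (b i^2 + b j^2)) := by
  have key : ∑ i, ∑ j, c i * c j * (2 * b i * b j / (b i^2 + b j^2))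
      = ∫ t in Ioi (0:ℝ), (∑ i, gfun c b i t)^2 := by
    have hsq : ∀ t, (∑ i, gfun c b i t)^2 = ∑ i, ∑ j, gfun c b i t * gfun c b j t := by
      intro t
      rw [sq, Finset.sum_mul_sum]
    rw [show (fun t => (∑ i, gfun c b i t)^2)
        = fun t => ∑ i, ∑ j, gfun c b i t * gfun c b j t from funext hsq]
    rw [integral_finset_sum _ (fun i _ => integrable_finset_sum _
      (fun j _ => (gfun_pair c b hb i j).1))]
    exact Finset.sum_congr rfl fun i _ => by
      rw [integral_finset_sum _ (fun j _ => (gfun_pair c b hb i j).1)]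
      exact Finset.sum_congr rfl fun j _ => ((gfun_pair c b hb i j).2).symm
  rw [key]
  exact integral_nonneg fun t => sq_nonneg _

end Cauchy

section Comb
variable {ι : Type*} [Fintype ι] [DecidableEq ι]

lemma exists_topk (l : ι → ℝ) :
    ∀ k : ℕ, k ≤ Fintype.card ι → ∃ t : Finset ι, t.card = k ∧
      ∀ i ∈ t, ∀ j ∉ t, l j ≤ l i := by
  intro k
  induction k with
  | zero => exact fun _ => ⟨∅, by simp⟩
  | succ k ih =>
    intro hk
    obtain ⟨t, hcard, htop⟩ := ih (Nat.le_of_succ_le hk)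
    have hne : (tᶜ : Finset ι).Nonempty := by
      rw [← Finset.card_pos, Finset.card_compl, hcard]
      omega
    obtain ⟨j0, hj0mem, hj0max⟩ := Finset.exists_max_image (tᶜ : Finset ι) l hne
    refine ⟨insert j0 t, ?_, ?_⟩
    · rw [Finset.card_insert_of_notMem (Finset.mem_compl.mp hj0mem), hcard]
    · intro i hi j hj
      have hjt : j ∉ t := fun h => hj (Finset.mem_insert_of_mem h)
      rcases Finset.mem_insert.mp hi with rfl | hit
      · exact hj0max j (Finset.mem_compl.mpr hjt)
      · exact htop i hit j hjt

lemma weighted_le_topk (l d : ι → ℝ) (hd0 : ∀ i, 0 ≤ d i) (hd1 : ∀ i, d i ≤ 1)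
    (k : ℕ) (hsum : ∑ i, d i = k) :
    ∃ t : Finset ι, t.card = k ∧ ∑ i, d i * l i ≤ ∑ i ∈ t, l i := by
  have hkn : k ≤ Fintype.card ι := by
    have h1 : (k : ℝ) ≤ Fintype.card ι := by
      rw [← hsum]
      calc ∑ i, d i ≤ ∑ i : ι, (1:ℝ) := Finset.sum_le_sum fun i _ => hd1 i
        _ = Fintype.card ι := by simp
    exact_mod_cast h1
  obtain ⟨t, hcard, htop⟩ := exists_topk l k hkn
  refine ⟨t, hcard, ?_⟩
  rcases Nat.eq_zero_or_pos k with rfl | hkpos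
  · have hd : ∀ i, d i = 0 := fun i =>
      (Finset.sum_eq_zero_iff_of_nonneg (fun i _ => hd0 i)).mp (by simpa using hsum) i
        (Finset.mem_univ i)
    have h0 : ∑ i, d i * l i = 0 := Finset.sum_eq_zero fun i _ => by rw [hd i, zero_mul]
    rw [h0, Finset.card_eq_zero.mp hcard]
    simp
  · have htne : t.Nonempty := Finset.card_pos.mp (hcard ▸ hkpos)
    obtain ⟨i0, hi0t, hmin⟩ := Finset.exists_min_image t l htne
    set m := l i0 with hm
    have key : ∑ i, d i * l i - ∑ i ∈ t, l i ≤ 0 := by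
      have hsplit : ∑ i, d i * l i - ∑ i ∈ t, l i
          = ∑ i ∈ t, (d i - 1) * l i + ∑ i ∈ tᶜ, d i * l i := by
        have hu : ∑ i, d i * l i = ∑ i ∈ t, d i * l i + ∑ i ∈ tᶜ, d i * l i :=
          (Finset.sum_add_sum_compl t _).symm
        have ht' : ∑ i ∈ t, (d i - 1) * l i = ∑ i ∈ t, d i * l i - ∑ i ∈ t, l i := by
          rw [← Finset.sum_sub_distrib]
          exact Finset.sum_congr rfl fun i _ => by ring
        rw [hu, ht']
        ring
      rw [hsplit]
      have h1 : ∑ i ∈ t, (d i - 1) * l i ≤ ∑ i ∈ t, (d i - 1) * m :=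
        Finset.sum_le_sum fun i hi =>
          mul_le_mul_of_nonpos_left (hmin i hi) (by linarith [hd1 i])
      have h2 : ∑ i ∈ tᶜ, d i * l i ≤ ∑ i ∈ tᶜ, d i * m :=
        Finset.sum_le_sum fun i hi =>
          mul_le_mul_of_nonneg_left (htop i0 hi0t i (Finset.mem_compl.mp hi)) (hd0 i)
      have h3 : ∑ i ∈ t, (d i - 1) * m + ∑ i ∈ tᶜ, d i * m = 0 := by
        have hA : ∑ i ∈ t, (d i - 1) * m = (∑ i ∈ t, d i * m) - k * m := by
          have he : ∀ i, (d i - 1) * m = d i * m - m := fun i => by ring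
          simp_rw [he]
          rw [Finset.sum_sub_distrib, Finset.sum_const, hcard, nsmul_eq_mul]
        have hB : ∑ i ∈ t, d i * m + ∑ i ∈ tᶜ, d i * m = ∑ i, d i * m :=
          Finset.sum_add_sum_compl t _
        have hC : ∑ i, d i * m = k * m := by rw [← Finset.sum_mul, hsum]
        linarith
      linarith
    linarith

end Comb

section MatrixAux
variable {ι : Type*} [Fintype ι] [DecidableEq ι]

lemma trace_unitary_conj (U : Matrix.unitaryGroup ι ℝ) (M : Matrix ι ι ℝ) :
    ((U : Matrix ι ι ℝ) * M * star (U : Matrix ι ι ℝ)).trace = M.trace := by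
  rw [trace_mul_comm, ← mul_assoc, Matrix.UnitaryGroup.star_mul_self U, one_mul]

lemma unitary_mul_star_self (U : Matrix.unitaryGroup ι ℝ) :
    (U : Matrix ι ι ℝ) * star (U : Matrix ι ι ℝ) = 1 := U.2.2

lemma trace_unitary_conj' (U : Matrix.unitaryGroup ι ℝ) (M : Matrix ι ι ℝ) :
    (star (U : Matrix ι ι ℝ) * M * (U : Matrix ι ι ℝ)).trace = M.trace := by
  rw [trace_mul_comm, ← mul_assoc, unitary_mul_star_self U, one_mul]

lemma aux_trace_mul_diagonal (M : Matrix ι ι ℝ) (v : ι → ℝ) :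
    (M * diagonal v).trace = ∑ i, M i i * v i := by
  simp [Matrix.trace, Matrix.diag, Matrix.mul_diagonal]

lemma aux_sum_eigenvalues_eq_trace {M : Matrix ι ι ℝ} (hM : M.IsHermitian) :
    ∑ i, hM.eigenvalues i = M.trace := by
  conv_rhs => rw [hM.spectral_theorem, Unitary.conjStarAlgAut_apply]
  rw [trace_unitary_conj]
  simp [Matrix.trace_diagonal]

lemma psd_diag_nonneg {M : Matrix ι ι ℝ} (hM : M.PosSemidef) (i : ι) : 0 ≤ M i i := by
  simpa using hM.dotProduct_mulVec_nonneg (Pi.single i 1)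

lemma psd_entry_spectral {P : Matrix ι ι ℝ} (hP : P.PosSemidef) (i j : ι) :
    P i j = ∑ k, hP.1.eigenvalues k *
      ((hP.1.eigenvectorUnitary : Matrix ι ι ℝ) i k *
       (hP.1.eigenvectorUnitary : Matrix ι ι ℝ) j k) := by
  conv_lhs => rw [hP.1.spectral_theorem, Unitary.conjStarAlgAut_apply]
  rw [Matrix.mul_apply]
  refine Finset.sum_congr rfl fun k _ => ?_
  rw [Matrix.mul_diagonal, Matrix.star_apply]
  simp [Function.comp]
  ring

lemma schur_product_psd {C P : Matrix ι ι ℝ} (hC : C.PosSemidef) (hP : P.PosSemidef) :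
    (C ⊙ P).PosSemidef := by
  refine Matrix.PosSemidef.of_dotProduct_mulVec_nonneg ?_ ?_
  · show (C ⊙ P)ᴴ = C ⊙ P
    ext i j
    have hc := hC.1.apply i j
    have hp := hP.1.apply i j
    simp only [star_trivial] at hc hp
    rw [Matrix.conjTranspose_apply, Matrix.hadamard_apply, Matrix.hadamard_apply,
      star_trivial, hc, hp]
  · intro x
    set U : Matrix ι ι ℝ := (hP.1.eigenvectorUnitary : Matrix ι ι ℝ) with hU
    set μ := hP.1.eigenvalues with hμ
    have key : star x ⬝ᵥ (C ⊙ P) *ᵥ x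
        = ∑ k, μ k * ((fun i => x i * U i k) ⬝ᵥ C *ᵥ (fun i => x i * U i k)) := by
      simp only [dotProduct, mulVec, hadamard_apply, star_trivial]
      simp_rw [psd_entry_spectral hP, ← hU, ← hμ, Finset.mul_sum, Finset.sum_mul]
      simp_rw [Finset.mul_sum]
      conv_rhs => rw [Finset.sum_comm]
      refine Finset.sum_congr rfl fun i _ => ?_
      rw [Finset.sum_comm]
      refine Finset.sum_congr rfl fun k _ => Finset.sum_congr rfl fun j _ => by ring
    rw [key]
    refine Finset.sum_nonneg fun k _ => mul_nonneg (hP.eigenvalues_nonneg k) ?_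
    simpa using hC.dotProduct_mulVec_nonneg (fun i => x i * U i k)

/-- conjugation by a unitary is multiplicative -/
lemma uconj_mul (V : Matrix.unitaryGroup ι ℝ) (M N : Matrix ι ι ℝ) :
    star (V : Matrix ι ι ℝ) * (M * N) * V
      = (star (V : Matrix ι ι ℝ) * M * V) * (star (V : Matrix ι ι ℝ) * N * V) := by
  have hVV : (V : Matrix ι ι ℝ) * star (V : Matrix ι ι ℝ) = 1 :=
    unitary_mul_star_self V
  calc star (V : Matrix ι ι ℝ) * (M * N) * V
      = star (V : Matrix ι ι ℝ) * M * ((V : Matrix ι ι ℝ) * star (V : Matrix ι ι ℝ)) * N * V := by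
        rw [hVV, Matrix.mul_one]; simp only [Matrix.mul_assoc]
    _ = (star (V : Matrix ι ι ℝ) * M * V) * (star (V : Matrix ι ι ℝ) * N * V) := by
        simp only [Matrix.mul_assoc]

end MatrixAux

section Spectral
variable {ι : Type*} [Fintype ι] [DecidableEq ι]

lemma subset_eig_proj {Z : Matrix ι ι ℝ} (hZ : Z.IsHermitian) (s : Finset ι) :
    ∃ P : Matrix ι ι ℝ, P.PosSemidef ∧ (1 - P).PosSemidef ∧ P.trace = s.card ∧
      (P * Z).trace = ∑ i ∈ s, hZ.eigenvalues i := by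
  set U : Matrix ι ι ℝ := (hZ.eigenvectorUnitary : Matrix ι ι ℝ) with hUdef
  have hVV : U * star U = 1 := unitary_mul_star_self _
  have hVV' : star U * U = 1 := Matrix.UnitaryGroup.star_mul_self _
  set χ : ι → ℝ := fun i => if i ∈ s then 1 else 0 with hχ
  refine ⟨U * diagonal χ * star U, ?_, ?_, ?_, ?_⟩
  · have h1 : (diagonal χ).PosSemidef :=
      Matrix.PosSemidef.diagonal fun i => by by_cases h : i ∈ s <;> simp [hχ, h]
    have := h1.mul_mul_conjTranspose_same U
    rwa [← Matrix.star_eq_conjTranspose] at this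
  · have heq : (1 : Matrix ι ι ℝ) - U * diagonal χ * star U
        = U * diagonal (fun i => 1 - χ i) * star U := by
      have hd : diagonal (fun i => 1 - χ i) = 1 - diagonal χ := by
        rw [← Matrix.diagonal_one, ← Matrix.diagonal_sub]
      rw [hd, Matrix.mul_sub, Matrix.mul_one, Matrix.sub_mul, hVV]
    rw [heq]
    have h1 : (diagonal (fun i => 1 - χ i)).PosSemidef :=
      Matrix.PosSemidef.diagonal fun i => by by_cases h : i ∈ s <;> simp [hχ, h]
    have := h1.mul_mul_conjTranspose_same U
    rwa [← Matrix.star_eq_conjTranspose] at this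
  · rw [trace_unitary_conj, Matrix.trace_diagonal]
    simp [hχ]
  · have hmul : (U * diagonal χ * star U) * Z
        = U * (diagonal χ * Matrix.diagonal (RCLike.ofReal ∘ hZ.eigenvalues)) * star U := by
      conv_lhs => rw [hZ.spectral_theorem, Unitary.conjStarAlgAut_apply]
      calc (U * diagonal χ * star U) * (U * Matrix.diagonal (RCLike.ofReal ∘ hZ.eigenvalues) * star U)
          = U * diagonal χ * (star U * U) * Matrix.diagonal (RCLike.ofReal ∘ hZ.eigenvalues) * star U := by
            simp only [Matrix.mul_assoc]
        _ = U * (diagonal χ * Matrix.diagonal (RCLike.ofReal ∘ hZ.eigenvalues)) * star U := by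
            rw [hVV', Matrix.mul_one]; simp only [Matrix.mul_assoc]
    rw [hmul, trace_unitary_conj, Matrix.diagonal_mul_diagonal, Matrix.trace_diagonal]
    simp [hχ, ite_mul]

lemma kyfan_bound {Y Q : Matrix ι ι ℝ} (hY : Y.IsHermitian) (hQ : Q.PosSemidef)
    (hQ1 : ((1 : Matrix ι ι ℝ) - Q).PosSemidef) (k : ℕ) (htr : Q.trace = k) :
    ∃ t : Finset ι, t.card = k ∧ (Q * Y).trace ≤ ∑ i ∈ t, hY.eigenvalues i := by
  set W : Matrix ι ι ℝ := (hY.eigenvectorUnitary : Matrix ι ι ℝ) with hWdef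
  have hWW : W * star W = 1 := unitary_mul_star_self _
  have hWW' : star W * W = 1 := Matrix.UnitaryGroup.star_mul_self _
  set R : Matrix ι ι ℝ := star W * Q * W with hRdef
  have hR : R.PosSemidef := by
    have := hQ.conjTranspose_mul_mul_same W
    rwa [← Matrix.star_eq_conjTranspose] at this
  have hR1 : ((1 : Matrix ι ι ℝ) - R).PosSemidef := by
    have heq : (1 : Matrix ι ι ℝ) - R = star W * ((1 : Matrix ι ι ℝ) - Q) * W := by
      rw [Matrix.mul_sub, Matrix.sub_mul, Matrix.mul_one, hRdef, hWW']
    rw [heq]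
    have := hQ1.conjTranspose_mul_mul_same W
    rwa [← Matrix.star_eq_conjTranspose] at this
  set d : ι → ℝ := fun i => R i i with hd
  have hd0 : ∀ i, 0 ≤ d i := fun i => psd_diag_nonneg hR i
  have hd1 : ∀ i, d i ≤ 1 := by
    intro i
    have := psd_diag_nonneg hR1 i
    have hone : (1 : Matrix ι ι ℝ) i i = 1 := Matrix.one_apply_eq i
    simp only [Matrix.sub_apply, hone] at this
    linarith
  have hdsum : ∑ i, d i = k := by
    have : ∑ i, d i = R.trace := rfl
    rw [this, hRdef, trace_unitary_conj', htr]
  have htrQY : (Q * Y).trace = ∑ i, d i * hY.eigenvalues i := by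
    conv_lhs => rw [hY.spectral_theorem, Unitary.conjStarAlgAut_apply]
    have hmul : Q * (W * Matrix.diagonal (RCLike.ofReal ∘ hY.eigenvalues) * star W)
        = W * (R * Matrix.diagonal (RCLike.ofReal ∘ hY.eigenvalues)) * star W := by
      rw [hRdef]
      calc Q * (W * Matrix.diagonal (RCLike.ofReal ∘ hY.eigenvalues) * star W)
          = (W * star W) * Q * (W * Matrix.diagonal (RCLike.ofReal ∘ hY.eigenvalues) * star W) := by
            rw [hWW, Matrix.one_mul]
        _ = W * (star W * Q * W * Matrix.diagonal (RCLike.ofReal ∘ hY.eigenvalues)) * star W := by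
            simp only [Matrix.mul_assoc]
    rw [hmul, trace_unitary_conj]
    have : (R * Matrix.diagonal (RCLike.ofReal ∘ hY.eigenvalues)).trace
        = ∑ i, R i i * (RCLike.ofReal ∘ hY.eigenvalues) i := aux_trace_mul_diagonal _ _
    rw [this]
    rfl
  obtain ⟨t, hc, hle⟩ := weighted_le_topk hY.eigenvalues d hd0 hd1 k hdsum
  exact ⟨t, hc, by rw [htrQY]; exact hle⟩

end Spectral

section Hadamard
variable {ι : Type*} [Fintype ι] [DecidableEq ι]

lemma trace_mul_hadamard_symm {C : Matrix ι ι ℝ} (hCs : ∀ i j, C i j = C j i)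
    (M N : Matrix ι ι ℝ) :
    (M * (C ⊙ N)).trace = ((C ⊙ M) * N).trace := by
  simp only [Matrix.trace, Matrix.diag, Matrix.mul_apply, Matrix.hadamard_apply]
  refine Finset.sum_congr rfl fun i _ => Finset.sum_congr rfl fun j _ => ?_
  rw [hCs j i]
  ring

lemma trace_hadamard (C P : Matrix ι ι ℝ) : (C ⊙ P).trace = ∑ i, C i i * P i i := by
  simp [Matrix.trace, Matrix.diag, Matrix.hadamard_apply]

end Hadamard

end AuxLyapunov

/-- For a real symmetric positive semidefinite `A` with positive semidefinite square root
`√A`, the matrix `√A * X * √A` is majorized by `(AX + XA)/2` for every symmetric `X`. -/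
theorem sqrt_quadratic_majorized_lyapunov {n : ℕ}
    (A X : Matrix (Fin n) (Fin n) ℝ) (hA : A.PosSemidef) (hX : X.IsHermitian) :
    MatMajorizedBy (hA.sqrt * X * hA.sqrt) ((2 : ℝ)⁻¹ • (A * X + X * A)) := by
  classical
  set B := hA.sqrt with hBdef
  have hB : B.PosSemidef := aux_posSemidef_sqrt hA
  have hBB : B * B = A := aux_sqrt_mul_self hA
  set Z := B * X * B with hZdef
  set Y := (2 : ℝ)⁻¹ • (A * X + X * A) with hYdef
  have hAh : A.IsHermitian := hA.1
  have hZ : Z.IsHermitian := by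
    show Zᴴ = Z
    rw [hZdef, Matrix.conjTranspose_mul, Matrix.conjTranspose_mul, hB.1, hX,
      ← Matrix.mul_assoc]
  have hY : Y.IsHermitian := by
    show Yᴴ = Y
    rw [hYdef, Matrix.conjTranspose_smul, Matrix.conjTranspose_add, Matrix.conjTranspose_mul,
      Matrix.conjTranspose_mul, hAh, hX, star_trivial, add_comm (X*A)]
  -- diagonalize B
  set V : Matrix (Fin n) (Fin n) ℝ := (hB.1.eigenvectorUnitary : Matrix (Fin n) (Fin n) ℝ)
    with hVdef
  set b := hB.1.eigenvalues with hbdef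
  have hb0 : ∀ i, 0 ≤ b i := fun i => hB.eigenvalues_nonneg i
  have hVV : V * star V = 1 := unitary_mul_star_self _
  have hVV' : star V * V = 1 := Matrix.UnitaryGroup.star_mul_self _
  have hreal : (RCLike.ofReal ∘ b : Fin n → ℝ) = b := by funext i; simp
  have hBspec : B = V * diagonal b * star V := by
    conv_lhs => rw [hB.1.spectral_theorem, Unitary.conjStarAlgAut_apply]
    rw [hreal]
  have hconjB : star V * B * V = diagonal b := by
    rw [hBspec]
    calc star V * (V * diagonal b * star V) * V
        = (star V * V) * diagonal b * (star V * V) := by simp only [Matrix.mul_assoc]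
      _ = diagonal b := by rw [hVV', Matrix.one_mul, Matrix.mul_one]
  set X' : Matrix (Fin n) (Fin n) ℝ := star V * X * V with hX'def
  have hZconj : star V * Z * V = diagonal b * X' * diagonal b := by
    rw [hZdef, uconj_mul, uconj_mul, hconjB]
  have hAconj : star V * A * V = diagonal b * diagonal b := by
    rw [← hBB, uconj_mul, hconjB]
  have hYconj : star V * Y * V
      = (2:ℝ)⁻¹ • (diagonal b * diagonal b * X' + X' * (diagonal b * diagonal b)) := by
    rw [hYdef, mul_smul_comm, smul_mul_assoc, Matrix.mul_add, Matrix.add_mul,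
      uconj_mul, uconj_mul, hAconj]
  -- the Schur multiplier matrix
  set e : Fin n → ℝ := fun i => if b i = 0 then 1 else 0 with hedef
  set C : Matrix (Fin n) (Fin n) ℝ :=
    Matrix.of (fun i j => 2 * b i * b j / (b i^2 + b j^2) + e i * e j) with hCdef
  have hCapp : ∀ i j, C i j = 2 * b i * b j / (b i^2 + b j^2) + e i * e j := fun i j => rfl
  have hCsymm : ∀ i j, C i j = C j i := by
    intro i j
    rw [hCapp i j, hCapp j i]
    ring
  have hCdiag : ∀ i, C i i = 1 := by
    intro i
    rw [hCapp]
    by_cases h : b i = 0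
    · simp [h, hedef]
    · have h2 : b i^2 + b i^2 ≠ 0 := by positivity
      have he : e i = 0 := by simp [hedef, h]
      rw [he, mul_zero, add_zero, div_eq_one_iff_eq h2]
      ring
  have hCpsd : C.PosSemidef := by
    refine Matrix.PosSemidef.of_dotProduct_mulVec_nonneg ?_ ?_
    · show Cᴴ = C
      ext i j
      rw [Matrix.conjTranspose_apply, star_trivial, hCsymm]
    · intro x
      have hform : star x ⬝ᵥ C *ᵥ x
          = (∑ i, ∑ j, x i * x j * (2 * b i * b j / (b i^2 + b j^2)))
            + (∑ i, x i * e i)^2 := by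
        simp only [dotProduct, mulVec, star_trivial]
        simp only [hCapp]
        rw [sq, Finset.sum_mul_sum, ← Finset.sum_add_distrib]
        refine Finset.sum_congr rfl fun i _ => ?_
        rw [Finset.mul_sum, ← Finset.sum_add_distrib]
        refine Finset.sum_congr rfl fun j _ => ?_
        ring
      rw [hform]
      exact add_nonneg (cauchy_quadform_nonneg x b hb0) (sq_nonneg _)
  -- the key entrywise identity
  have hkey : diagonal b * X' * diagonal b
      = C ⊙ ((2:ℝ)⁻¹ • (diagonal b * diagonal b * X' + X' * (diagonal b * diagonal b))) := by
    ext i j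
    rw [Matrix.hadamard_apply]
    have hL : (diagonal b * X' * diagonal b) i j = b i * X' i j * b j := by
      rw [Matrix.mul_diagonal, Matrix.diagonal_mul]
    have hR : ((2:ℝ)⁻¹ • (diagonal b * diagonal b * X' + X' * (diagonal b * diagonal b))) i j
        = (2:ℝ)⁻¹ * ((b i * b i) * X' i j + X' i j * (b j * b j)) := by
      rw [Matrix.smul_apply, Matrix.add_apply, Matrix.diagonal_mul_diagonal,
        Matrix.diagonal_mul, Matrix.mul_diagonal, smul_eq_mul]
    rw [hL, hR, hCapp]
    by_cases hi : b i = 0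
    · by_cases hj : b j = 0
      · simp [hi, hj, hedef]
      · have hej : e j = 0 := by simp [hedef, hj]
        simp [hi, hej]
    · have hei : e i = 0 := by simp [hedef, hi]
      by_cases hj : b j = 0
      · simp [hj, hei]
      · have hs : b i^2 + b j^2 ≠ 0 := by positivity
        rw [hei, zero_mul, add_zero]
        field_simp
  refine ⟨hZ, hY, ?_, ?_⟩
  · -- the subset-sum part
    intro s
    obtain ⟨P, hPpsd, hP1psd, hPtr, hPZ⟩ := subset_eig_proj hZ s
    set P' : Matrix (Fin n) (Fin n) ℝ := star V * P * V with hP'def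
    have hP'psd : P'.PosSemidef := by
      have := hPpsd.conjTranspose_mul_mul_same V
      rwa [← Matrix.star_eq_conjTranspose] at this
    have hP'1psd : ((1 : Matrix (Fin n) (Fin n) ℝ) - P').PosSemidef := by
      have heq : (1 : Matrix (Fin n) (Fin n) ℝ) - P' = star V * (1 - P) * V := by
        rw [Matrix.mul_sub, Matrix.sub_mul, Matrix.mul_one, hP'def, hVV']
      rw [heq]
      have := hP1psd.conjTranspose_mul_mul_same V
      rwa [← Matrix.star_eq_conjTranspose] at this
    set Q : Matrix (Fin n) (Fin n) ℝ := V * (C ⊙ P') * star V with hQdef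
    have hQpsd : Q.PosSemidef := by
      have := (schur_product_psd hCpsd hP'psd).mul_mul_conjTranspose_same V
      rwa [← Matrix.star_eq_conjTranspose] at this
    have hQ1psd : ((1 : Matrix (Fin n) (Fin n) ℝ) - Q).PosSemidef := by
      have hsub : C ⊙ ((1 : Matrix (Fin n) (Fin n) ℝ) - P') = 1 - C ⊙ P' := by
        ext i j
        simp only [Matrix.hadamard_apply, Matrix.sub_apply]
        rw [mul_sub]
        congr 1
        by_cases h : i = j
        · subst h
          rw [Matrix.one_apply_eq, mul_one, hCdiag]
        · rw [Matrix.one_apply_ne h, mul_zero]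
      have heq : (1 : Matrix (Fin n) (Fin n) ℝ) - Q
          = V * (C ⊙ ((1 : Matrix (Fin n) (Fin n) ℝ) - P')) * star V := by
        rw [hsub, Matrix.mul_sub, Matrix.sub_mul, Matrix.mul_one, hQdef, hVV]
      rw [heq]
      have := (schur_product_psd hCpsd hP'1psd).mul_mul_conjTranspose_same V
      rwa [← Matrix.star_eq_conjTranspose] at this
    have hQtr : Q.trace = s.card := by
      rw [hQdef, trace_unitary_conj, trace_hadamard]
      have h2 : ∑ i, C i i * P' i i = ∑ i, P' i i :=
        Finset.sum_congr rfl fun i _ => by rw [hCdiag, one_mul]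
      rw [h2]
      have h3 : ∑ i, P' i i = P'.trace := rfl
      rw [h3, hP'def, trace_unitary_conj', hPtr]
    have htrPZQY : (Q * Y).trace = (P * Z).trace := by
      have hQY : Q * Y = V * ((C ⊙ P') * (star V * Y * V)) * star V := by
        rw [hQdef]
        calc (V * (C ⊙ P') * star V) * Y
            = V * (C ⊙ P') * (star V * Y * (V * star V)) := by
              rw [hVV, Matrix.mul_one]; simp only [Matrix.mul_assoc]
          _ = V * ((C ⊙ P') * (star V * Y * V)) * star V := by simp only [Matrix.mul_assoc]
      rw [hQY, trace_unitary_conj, hYconj, ← trace_mul_hadamard_symm hCsymm, ← hkey, ← hZconj,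
        hP'def]
      calc ((star V * P * V) * (star V * Z * V)).trace
          = (star V * (P * Z) * V).trace := by rw [← uconj_mul]
        _ = (P * Z).trace := trace_unitary_conj' _ _
    obtain ⟨t, htc, hle⟩ := kyfan_bound hY hQpsd hQ1psd s.card hQtr
    refine ⟨t, htc, ?_⟩
    rw [← hPZ, ← htrPZQY]
    exact hle
  · -- equal total sums
    rw [aux_sum_eigenvalues_eq_trace hZ, aux_sum_eigenvalues_eq_trace hY]
    have h1 : Z.trace = (A * X).trace := by
      rw [hZdef, trace_mul_comm, ← Matrix.mul_assoc, hBB]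
    have h2 : Y.trace = (A * X).trace := by
      rw [hYdef, Matrix.trace_smul, Matrix.trace_add, trace_mul_comm X A, smul_eq_mul]
      ring
    rw [h1, h2]
end
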